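/- arXiv:2204.09889 — 2 statements merged into one kernel-verified Lean document; each statement's English description precedes it below -/
import Mathlib

section
/- Let p, r, s ≥ 1 and let M be a real symmetric positive semidefinite matrix of size (p+r+s)×(p+r+s), partitioned as M = [[A, B, C], [Bᵀ, D, E], [Cᵀ, Eᵀ, F]] with A of size p×p, D of size r×r, and F of size s×s. Assume that D is positive definite and that the (r+s)×(r+s) block G = [[D, E], [Eᵀ, F]] is positive definite. Then the matrix (A − B D⁻¹ Bᵀ) − (A − [B C] G⁻¹ [B C]ᵀ) is positive semidefinite; that is, the conditional covariance of the p test points given all r+s inducing points is dominated in the Loewner order by their conditional covariance given only the first r inducing points. -/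
open Matrix

/-- The conditional covariance of the `p` test points given all `r + s` inducing points
is dominated in the Loewner order by their conditional covariance given only the first
`r` inducing points. -/
theorem conditional_covariance_loewner_nonincreasing
    (p r s : ℕ) (hp : 1 ≤ p) (hr : 1 ≤ r) (hs : 1 ≤ s)
    (A : Matrix (Fin p) (Fin p) ℝ) (B : Matrix (Fin p) (Fin r) ℝ)
    (C : Matrix (Fin p) (Fin s) ℝ) (D : Matrix (Fin r) (Fin r) ℝ)
    (E : Matrix (Fin r) (Fin s) ℝ) (F : Matrix (Fin s) (Fin s) ℝ)
    (hM : (Matrix.fromBlocks A (Matrix.fromCols B C)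
            (Matrix.fromCols B C)ᵀ (Matrix.fromBlocks D E Eᵀ F)).PosSemidef)
    (hD : D.PosDef)
    (hG : (Matrix.fromBlocks D E Eᵀ F).PosDef) :
    ((A - B * D⁻¹ * Bᵀ) -
      (A - Matrix.fromCols B C * (Matrix.fromBlocks D E Eᵀ F)⁻¹ *
        (Matrix.fromCols B C)ᵀ)).PosSemidef := by
  set BC := Matrix.fromCols B C with hBC
  set G := Matrix.fromBlocks D E Eᵀ F with hGdef
  set S := F - Eᵀ * D⁻¹ * E with hSdef
  set P : Matrix (Fin r ⊕ Fin s) (Fin r ⊕ Fin s) ℝ := Matrix.fromBlocks D⁻¹ 0 0 0 with hP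
  have hDdet : IsUnit D.det := hD.det_pos.ne'.isUnit
  have hGdet : IsUnit G.det := hG.det_pos.ne'.isUnit
  have hDD : D * D⁻¹ = 1 := Matrix.mul_nonsing_inv D hDdet
  have hDD' : D⁻¹ * D = 1 := Matrix.nonsing_inv_mul D hDdet
  have hGG : G * G⁻¹ = 1 := Matrix.mul_nonsing_inv G hGdet
  have hGG' : G⁻¹ * G = 1 := Matrix.nonsing_inv_mul G hGdet
  -- S is positive semidefinite (Schur complement of a PSD block matrix)
  haveI : Invertible D := hD.isUnit.invertible
  have hEH : Eᴴ = Eᵀ := Matrix.conjTranspose_eq_transpose_of_trivial E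
  have hS : S.PosSemidef := by
    have := (Matrix.PosDef.fromBlocks₁₁ E F hD).mp (by rw [hEH]; exact hG.posSemidef)
    rwa [hEH] at this
  -- key algebraic identity: G - G * P * G = fromBlocks 0 0 0 S
  have h1 : G - G * P * G = Matrix.fromBlocks 0 0 0 S := by
    rw [hGdef, hP, hSdef]
    rw [Matrix.fromBlocks_multiply, Matrix.fromBlocks_multiply]
    simp only [Matrix.mul_zero, Matrix.zero_mul, add_zero, zero_add, hDD,
      Matrix.one_mul, Matrix.mul_assoc, hDD', Matrix.mul_one]
    ext (i | i) (j | j) <;>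
      simp [Matrix.fromBlocks, Matrix.sub_apply]
  -- hence G⁻¹ - P = G⁻¹ * (fromBlocks 0 0 0 S) * G⁻¹
  have h2 : G⁻¹ - P = G⁻¹ * Matrix.fromBlocks 0 0 0 S * G⁻¹ := by
    rw [← h1]
    simp only [Matrix.mul_sub, Matrix.sub_mul, ← Matrix.mul_assoc, hGG', Matrix.one_mul]
    rw [Matrix.mul_assoc P G G⁻¹, hGG, Matrix.mul_one]
  -- BC * P * BCᵀ = B * D⁻¹ * Bᵀ
  have h3 : BC * P * BCᵀ = B * D⁻¹ * Bᵀ := by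
    rw [hBC, hP, Matrix.transpose_fromCols, Matrix.fromCols_mul_fromBlocks]
    simp [Matrix.fromCols_mul_fromRows, Matrix.mul_assoc]
  -- rewrite the goal
  have hgoal : (A - B * D⁻¹ * Bᵀ) - (A - BC * G⁻¹ * BCᵀ)
      = (BC * G⁻¹) * Matrix.fromBlocks (0 : Matrix (Fin r) (Fin r) ℝ) 0 0 S * (BC * G⁻¹)ᴴ := by
    have : (A - B * D⁻¹ * Bᵀ) - (A - BC * G⁻¹ * BCᵀ)
        = BC * (G⁻¹ - P) * BCᵀ := by
      rw [Matrix.mul_sub, Matrix.sub_mul, h3]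
      abel
    rw [this, h2]
    have hH : (BC * G⁻¹)ᴴ = (G⁻¹)ᵀ * BCᵀ := by
      rw [Matrix.conjTranspose_eq_transpose_of_trivial, Matrix.transpose_mul]
    have hGsym : (G⁻¹)ᵀ = G⁻¹ := by
      rw [Matrix.transpose_nonsing_inv,
        show Gᵀ = G from by rw [← Matrix.conjTranspose_eq_transpose_of_trivial]; exact hG.isHermitian.eq]
    rw [hH, hGsym]
    simp only [Matrix.mul_assoc]
  rw [hgoal]
  have h0 : (Matrix.fromBlocks (0 : Matrix (Fin r) (Fin r) ℝ) 0 0 S).PosSemidef := by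
    have key := hS.mul_mul_conjTranspose_same
      (Matrix.fromRows (0 : Matrix (Fin r) (Fin s) ℝ) (1 : Matrix (Fin s) (Fin s) ℝ))
    have heq : Matrix.fromRows (0 : Matrix (Fin r) (Fin s) ℝ) (1 : Matrix (Fin s) (Fin s) ℝ) * S *
        (Matrix.fromRows (0 : Matrix (Fin r) (Fin s) ℝ) (1 : Matrix (Fin s) (Fin s) ℝ))ᴴ =
        Matrix.fromBlocks (0 : Matrix (Fin r) (Fin r) ℝ) 0 0 S := by
      rw [Matrix.conjTranspose_eq_transpose_of_trivial, Matrix.transpose_fromRows,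
        Matrix.transpose_zero, Matrix.transpose_one, Matrix.fromRows_mul, Matrix.fromRows_mul,
        Matrix.mul_fromCols, Matrix.mul_fromCols, Matrix.zero_mul, Matrix.one_mul,
        Matrix.mul_zero, Matrix.mul_one, ← Matrix.fromRows_fromCols_eq_fromBlocks]
      simp
    rwa [heq] at key
  exact h0.mul_mul_conjTranspose_same _
end

section
/- Let φ(t) = (1/√(2π)) · exp(−t²/2) denote the standard normal density and Φ(x) = ∫_{−∞}^{x} φ(t) dt the standard normal cumulative distribution function. Then for every μ ∈ ℝ and every σ > 0, ∫ Φ(f) dν(f) = Φ( μ / √(1 + σ²) ), where ν is the Gaussian probability measure on ℝ with mean μ and variance σ². -/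
open MeasureTheory ProbabilityTheory Real

/-- The standard normal density `φ`. -/
noncomputable def stdGaussianPDF (t : ℝ) : ℝ :=
  (1 / Real.sqrt (2 * Real.pi)) * Real.exp (-t ^ 2 / 2)

/-- The standard normal cumulative distribution function `Φ`. -/
noncomputable def stdGaussianCDF (x : ℝ) : ℝ :=
  ∫ t in Set.Iic x, stdGaussianPDF t

lemma stdGaussianPDF_nonneg (t : ℝ) : 0 ≤ stdGaussianPDF t := by
  unfold stdGaussianPDF; positivity

lemma stdGaussianPDF_le (t : ℝ) : stdGaussianPDF t ≤ 1 / Real.sqrt (2 * Real.pi) := by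
  unfold stdGaussianPDF
  have h1 : Real.exp (-t ^ 2 / 2) ≤ 1 := by
    rw [Real.exp_le_one_iff]; nlinarith [sq_nonneg t]
  have h2 : (0:ℝ) ≤ 1 / Real.sqrt (2 * Real.pi) := by positivity
  nlinarith

lemma stdGaussianPDF_continuous : Continuous stdGaussianPDF := by
  unfold stdGaussianPDF
  fun_prop

lemma gaussianPDFReal_zero_one : gaussianPDFReal 0 1 = stdGaussianPDF := by
  funext x
  simp [gaussianPDFReal, stdGaussianPDF, one_div]

/-- shift lemma for set integrals over `Iic`. -/
lemma setIntegral_Iic_add (f : ℝ → ℝ) (c x : ℝ) :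
    ∫ s in Set.Iic x, f (s + c) = ∫ t in Set.Iic (x + c), f t := by
  have h := (measurePreserving_add_right (volume : Measure ℝ) c).setIntegral_preimage_emb
    (MeasurableEquiv.addRight c).measurableEmbedding f (Set.Iic (x + c))
  have hs : (· + c) ⁻¹' Set.Iic (x + c) = Set.Iic x := by
    ext u; simp
  rw [hs] at h
  exact h

lemma conv_key (μ σ : ℝ) (hσ : 0 < σ) (s : ℝ) :
    ∫ f, stdGaussianPDF (s + f) * gaussianPDFReal μ ⟨σ^2, sq_nonneg σ⟩ f
      = gaussianPDFReal (-μ) ⟨1+σ^2, by positivity⟩ s := by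
  have hπ := Real.pi_pos
  have hσ2 : (0:ℝ) < σ^2 := by positivity
  set b : ℝ := (1+σ^2)/(2*σ^2) with hb
  have hbpos : 0 < b := by positivity
  set m : ℝ := (μ - σ^2*s)/(1+σ^2) with hm
  set C : ℝ := (1/Real.sqrt (2*Real.pi)) * (Real.sqrt (2*Real.pi*σ^2))⁻¹
      * Real.exp (-(s+μ)^2/(2*(1+σ^2))) with hC
  have hpt : ∀ f : ℝ, stdGaussianPDF (s + f) * gaussianPDFReal μ ⟨σ^2, sq_nonneg σ⟩ f
      = C * Real.exp (-b*(f-m)^2) := by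
    intro f
    unfold stdGaussianPDF gaussianPDFReal
    erw [NNReal.coe_mk]
    rw [hC]
    rw [mul_assoc, mul_comm (Real.exp (-(s+f)^2/2)), mul_assoc, ← Real.exp_add,
      mul_assoc, mul_assoc, ← Real.exp_add]
    ring_nf
    congr 1
    congr 1
    rw [hb, hm]
    field_simp
    ring
  simp only [hpt]
  rw [integral_const_mul]
  have hshift : ∫ f : ℝ, Real.exp (-b*(f-m)^2) = ∫ x : ℝ, Real.exp (-b*x^2) := by
    simp_rw [sub_eq_add_neg]
    exact integral_add_right_eq_self (fun x => Real.exp (-b*x^2)) (-m)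
  rw [hshift, integral_gaussian]
  unfold gaussianPDFReal
  erw [NNReal.coe_mk]
  rw [hC]
  have h1 : s - (-μ) = s + μ := by ring
  rw [h1]
  rw [mul_comm _ (Real.exp (-(s+μ)^2/(2*(1+σ^2)))), mul_assoc, mul_comm]
  congr 1
  rw [one_div, ← Real.sqrt_inv, ← Real.sqrt_inv, ← Real.sqrt_inv,
    ← Real.sqrt_mul (by positivity), ← Real.sqrt_mul (by positivity)]
  congr 1
  rw [hb]
  field_simp

lemma tail_key (μ σ : ℝ) (hσ : 0 < σ) :
    ∫ s in Set.Iic 0, gaussianPDFReal (-μ) ⟨1+σ^2, by positivity⟩ s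
      = stdGaussianCDF (μ / Real.sqrt (1+σ^2)) := by
  have h0 : (0:ℝ) < 1 + σ^2 := by positivity
  set c : ℝ := Real.sqrt (1+σ^2) with hcdef
  have hc : 0 < c := Real.sqrt_pos.mpr h0
  set v2 : NNReal := ⟨1+σ^2, by positivity⟩ with hv2def
  have hv2 : v2 ≠ 0 := by
    intro h
    rw [← NNReal.coe_inj] at h
    simp [hv2def] at h
    change 1 + σ^2 = 0 at h
    nlinarith
  have h1 : (gaussianReal 0 1).map (c * ·) = gaussianReal 0 v2 := by
    rw [gaussianReal_map_const_mul]
    rw [mul_zero]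
    congr 1
    rw [← NNReal.coe_inj]
    simp [hv2def, Real.sq_sqrt h0.le]
    exact Real.sq_sqrt h0.le
  have h2 : (gaussianReal 0 v2).map (· + -μ) = gaussianReal (-μ) v2 := by
    rw [gaussianReal_map_add_const]
    norm_num
  have hmeas : gaussianReal (-μ) v2 (Set.Iic 0) = gaussianReal 0 1 (Set.Iic (μ/c)) := by
    rw [← h2, ← h1]
    rw [Measure.map_apply (measurable_id'.add_const _) measurableSet_Iic]
    have hp1 : (· + -μ) ⁻¹' Set.Iic (0:ℝ) = Set.Iic μ := by
      ext u; simp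
    rw [hp1]
    rw [Measure.map_apply (measurable_id'.const_mul _) measurableSet_Iic]
    congr 1
    ext u
    simp only [Set.mem_preimage, Set.mem_Iic]
    rw [mul_comm, ← le_div_iff₀ hc]
  rw [gaussianReal_apply_eq_integral _ hv2, gaussianReal_apply_eq_integral _ one_ne_zero] at hmeas
  rw [ENNReal.ofReal_eq_ofReal_iff] at hmeas
  · rw [hmeas, gaussianPDFReal_zero_one]
    rfl
  · exact setIntegral_nonneg measurableSet_Iic fun x _ => gaussianPDFReal_nonneg _ _ _
  · exact setIntegral_nonneg measurableSet_Iic fun x _ => gaussianPDFReal_nonneg _ _ _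

lemma gaussianPDFReal_continuous (μ : ℝ) (v : NNReal) : Continuous (gaussianPDFReal μ v) := by
  unfold gaussianPDFReal
  fun_prop

/-- The predictive class probability of the Gaussian process classifier:
`∫ Φ(f) dν(f) = Φ(μ / √(1 + σ²))` when `ν` is Gaussian with mean `μ` and variance `σ²`. -/
theorem integral_probit_gaussian (μ σ : ℝ) (hσ : 0 < σ) :
    ∫ f, stdGaussianCDF f ∂(ProbabilityTheory.gaussianReal μ ⟨σ ^ 2, sq_nonneg σ⟩)
      = stdGaussianCDF (μ / Real.sqrt (1 + σ ^ 2)) := by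

  set v1 : NNReal := ⟨σ ^ 2, sq_nonneg σ⟩ with hv1def
  have hv1 : v1 ≠ 0 := by
    intro h
    rw [← NNReal.coe_inj] at h
    simp [hv1def] at h
    exact hσ.ne' (pow_eq_zero_iff two_ne_zero |>.mp (show σ^2 = 0 from h))
  -- Step 1 : integral against the Gaussian measure as a Lebesgue integral with density
  have step1 : ∫ f, stdGaussianCDF f ∂(gaussianReal μ v1)
      = ∫ x, gaussianPDFReal μ v1 x * stdGaussianCDF x := by
    rw [gaussianReal_of_var_ne_zero _ hv1]
    have : gaussianPDF μ v1 = fun x => ((gaussianPDFReal μ v1 x).toNNReal : ENNReal) := rfl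
    rw [this, integral_withDensity_eq_integral_smul
      ((measurable_gaussianPDFReal μ v1).real_toNNReal) stdGaussianCDF]
    congr 1
    funext x
    rw [NNReal.smul_def, Real.coe_toNNReal _ (gaussianPDFReal_nonneg μ v1 x), smul_eq_mul]
  rw [step1]
  -- Step 2 : CDF as a shifted set integral
  have step2 : ∀ x : ℝ, stdGaussianCDF x = ∫ s in Set.Iic (0:ℝ), stdGaussianPDF (s + x) := by
    intro x
    rw [setIntegral_Iic_add stdGaussianPDF x 0, zero_add]
    rfl
  have step2' : (fun x => gaussianPDFReal μ v1 x * stdGaussianCDF x)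
      = fun x => ∫ s in Set.Iic (0:ℝ), stdGaussianPDF (s + x) * gaussianPDFReal μ v1 x := by
    funext x
    rw [step2 x, MeasureTheory.integral_mul_const, mul_comm]
  rw [step2']
  -- Fubini
  have hFcont : Continuous (Function.uncurry fun s x => stdGaussianPDF (s + x) * gaussianPDFReal μ v1 x) :=
    ((stdGaussianPDF_continuous.comp (continuous_fst.add continuous_snd)).mul
      ((gaussianPDFReal_continuous μ v1).comp continuous_snd))
  have hInt : Integrable (Function.uncurry (fun s x => stdGaussianPDF (s + x) * gaussianPDFReal μ v1 x))
      (((volume : Measure ℝ).restrict (Set.Iic 0)).prod (volume : Measure ℝ)) := by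
    rw [integrable_prod_iff hFcont.aestronglyMeasurable]
    constructor
    · refine Filter.Eventually.of_forall fun s => ?_
      exact (integrable_gaussianPDFReal μ v1).bdd_mul
        (stdGaussianPDF_continuous.comp (continuous_const.add continuous_id)).aestronglyMeasurable
        (Filter.Eventually.of_forall fun x => by
          rw [Real.norm_of_nonneg (stdGaussianPDF_nonneg _)]
          exact stdGaussianPDF_le _)
    · have heq : (fun s => ∫ x, ‖stdGaussianPDF (s + x) * gaussianPDFReal μ v1 x‖)
          = fun s => gaussianPDFReal (-μ) ⟨1+σ^2, by positivity⟩ s := by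
        funext s
        rw [← conv_key μ σ hσ s]
        congr 1
        funext x
        rw [Real.norm_of_nonneg (mul_nonneg (stdGaussianPDF_nonneg _) (gaussianPDFReal_nonneg _ _ _))]
      simp only [Function.uncurry_apply_pair]
      rw [heq]
      exact (integrable_gaussianPDFReal _ _).restrict
  rw [← MeasureTheory.integral_integral_swap hInt]
  have step4 : (fun s => ∫ x, stdGaussianPDF (s + x) * gaussianPDFReal μ v1 x)
      = fun s => gaussianPDFReal (-μ) ⟨1+σ^2, by positivity⟩ s := by
    funext s
    exact conv_key μ σ hσ s
  rw [show (∫ s in Set.Iic (0:ℝ), ∫ x, stdGaussianPDF (s + x) * gaussianPDFReal μ v1 x)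
      = ∫ s in Set.Iic (0:ℝ), gaussianPDFReal (-μ) ⟨1+σ^2, by positivity⟩ s from by rw [← step4]]
  exact tail_key μ σ hσ
end
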